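/- Let A be an n×n matrix over a commutative ring, D = diag(v_1,…,v_n) a diagonal matrix of indeterminates, and write det(A+D−λI) = ∑_{i=0}^n C_i(v)(−λ)^{n−i}. Then for all 1 ≤ i ≤ n, S_i := C_i(v) − C_i(0) = ∑_{J ⊆ [n], 1 ≤ |J| ≤ i} ( ∑_{N ⊆ [n]∖J, |N| = i−|J|} det(A_N) ) v^J, where v^J = ∏_{j∈J} v_j and A_N is the principal submatrix of A on rows and columns indexed by N. -/
import Mathlib


open MvPolynomial Finset Matrix

variable {K : Type*} [CommRing K] {n : ℕ}

/-- The principal minor of `A` on the rows and columns indexed by `N`. -/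
noncomputable def principalMinor (A : Matrix (Fin n) (Fin n) K) (N : Finset (Fin n)) : K :=
  Matrix.det (A.submatrix (fun x : {x // x ∈ N} => (x : Fin n)) fun x : {x // x ∈ N} => (x : Fin n))

section Aux

variable {R : Type*} [CommRing R]

lemma det_piecewise_single (M : Matrix (Fin n) (Fin n) R) (S : Finset (Fin n)) :
    Matrix.det (Matrix.of (S.piecewise (fun i => Pi.single i (1 : R)) (fun i => M i))) =
      principalMinor M (Finset.univ \ S) := by
  rw [Matrix.twoBlockTriangular_det' _ (· ∈ S)]
  · have h1 : (Matrix.toSquareBlockProp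
        (Matrix.of (S.piecewise (fun i => Pi.single i (1 : R)) (fun i => M i))) (· ∈ S)) = 1 := by
      ext ⟨a, ha⟩ ⟨b, hb⟩
      show (S.piecewise (fun i => Pi.single i (1 : R)) (fun i => M i)) a b = _
      rw [Finset.piecewise_eq_of_mem _ _ _ ha]
      by_cases h : a = b
      · subst h; simp [Matrix.one_apply]
      · simp [Matrix.one_apply, h, Pi.single_apply, Ne.symm h, Subtype.ext_iff]
    rw [h1]
    simp only [Matrix.det_one, one_mul]
    rw [principalMinor, ← Matrix.det_submatrix_equiv_self
      ((Equiv.subtypeEquivRight (fun x => by simp)) :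
        {x : Fin n // x ∈ Finset.univ \ S} ≃ {x : Fin n // ¬ x ∈ S})]
    congr 1
    ext ⟨a, ha⟩ ⟨b, hb⟩
    simp only [Matrix.toSquareBlockProp, Matrix.submatrix_apply, Matrix.of_apply,
      Matrix.toBlock_apply, Equiv.subtypeEquivRight_apply]
    rw [Finset.piecewise_eq_of_notMem _ _ _ (Finset.mem_sdiff.mp ha).2]
  · intro i hi j hj
    simp only [Matrix.of_apply, Finset.piecewise_eq_of_mem _ _ _ hi]
    exact Pi.single_eq_of_ne (fun h => hj (by rw [h]; exact hi)) 1

lemma det_add_diagonal (M : Matrix (Fin n) (Fin n) R) (d : Fin n → R) :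
    (M + Matrix.diagonal d).det =
      ∑ S ∈ (Finset.univ : Finset (Fin n)).powerset,
        (∏ i ∈ S, d i) * principalMinor M (Finset.univ \ S) := by
  have hrows : (fun i => (M + Matrix.diagonal d) i) =
      (fun i => Pi.single i (d i)) + (fun i => M i) := by
    funext i
    ext j
    by_cases h : i = j <;>
      simp [Matrix.diagonal_apply, Pi.single_apply, h, eq_comm, add_comm]
  have hdet : (M + Matrix.diagonal d).det =
      (Matrix.detRowAlternating : (Fin n → R) [⋀^Fin n]→ₗ[R] R).toMultilinearMap
        ((fun i => Pi.single i (d i)) + (fun i => M i)) := by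
    rw [← hrows]; rfl
  rw [hdet, MultilinearMap.map_add_univ, ← Finset.powerset_univ]
  refine Finset.sum_congr rfl fun S _ => ?_
  set g : Fin n → (Fin n → R) := S.piecewise (fun i => Pi.single i (1 : R)) (fun i => M i) with hg
  have hpw : S.piecewise (fun i => Pi.single i (d i)) (fun i => M i) =
      S.piecewise (fun i => d i • g i) g := by
    funext i
    by_cases h : i ∈ S
    · rw [Finset.piecewise_eq_of_mem _ _ _ h, Finset.piecewise_eq_of_mem _ _ _ h, hg,
        Finset.piecewise_eq_of_mem _ _ _ h]
      ext j
      by_cases hj : j = i <;> simp [Pi.single_apply, hj]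
    · rw [Finset.piecewise_eq_of_notMem _ _ _ h, Finset.piecewise_eq_of_notMem _ _ _ h, hg,
        Finset.piecewise_eq_of_notMem _ _ _ h]
  rw [hpw, MultilinearMap.map_piecewise_smul, smul_eq_mul]
  congr 1
  exact det_piecewise_single M S

end Aux

section Aux2

variable {R : Type*} [CommRing R] {S : Type*} [CommRing S]

lemma principalMinor_neg (B : Matrix (Fin n) (Fin n) R) (N : Finset (Fin n)) :
    principalMinor (-B) N = (-1) ^ N.card * principalMinor B N := by
  rw [principalMinor, principalMinor,
    show ((-B).submatrix (fun x : {x // x ∈ N} => (x : Fin n))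
        (fun x : {x // x ∈ N} => (x : Fin n)))
      = -(B.submatrix (fun x : {x // x ∈ N} => (x : Fin n))
        (fun x : {x // x ∈ N} => (x : Fin n))) from rfl,
    Matrix.det_neg]
  congr 2
  simp [Fintype.card_coe]

lemma principalMinor_map (f : R →+* S) (B : Matrix (Fin n) (Fin n) R) (N : Finset (Fin n)) :
    principalMinor (B.map f) N = f (principalMinor B N) := by
  rw [principalMinor, principalMinor, RingHom.map_det]
  rfl

lemma charmatrix_add_diagonal (A : Matrix (Fin n) (Fin n) R) (w : Fin n → R) :
    Matrix.charmatrix (A + Matrix.diagonal w) =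
      (-(A.map Polynomial.C)) + Matrix.diagonal
        (fun j => (Polynomial.X : Polynomial R) - Polynomial.C (w j)) := by
  ext a b
  by_cases h : a = b <;>
    simp [Matrix.charmatrix_apply, Matrix.diagonal_apply, h, Matrix.map_apply] <;> ring

lemma charpoly_coeff_add_diagonal (A : Matrix (Fin n) (Fin n) R) (w : Fin n → R) (i : ℕ)
    (hin : i ≤ n) :
    (-1 : R) ^ i * (A + Matrix.diagonal w).charpoly.coeff (n - i) =
      ∑ J ∈ Finset.univ.powerset.filter (fun J : Finset (Fin n) => J.card ≤ i),
        (∑ N ∈ (Finset.univ \ J).powerset.filter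
            (fun N : Finset (Fin n) => N.card = i - J.card),
          principalMinor A N) * ∏ j ∈ J, w j := by
  rw [Matrix.charpoly, charmatrix_add_diagonal, det_add_diagonal]
  -- rewrite each summand as a sum of monomials
  have key : ∀ S ∈ (Finset.univ : Finset (Fin n)).powerset,
      (∏ j ∈ S, ((Polynomial.X : Polynomial R) - Polynomial.C (w j))) *
        principalMinor (-(A.map Polynomial.C)) (Finset.univ \ S) =
      ∑ T ∈ S.powerset,
        Polynomial.C ((-1 : R) ^ ((S \ T).card + (Finset.univ \ S).card) *
          ((∏ j ∈ S \ T, w j) * principalMinor A (Finset.univ \ S))) *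
          (Polynomial.X : Polynomial R) ^ T.card := by
    intro S _
    have h1 : principalMinor (-(A.map Polynomial.C)) (Finset.univ \ S) =
        (-1 : Polynomial R) ^ (Finset.univ \ S).card *
          Polynomial.C (principalMinor A (Finset.univ \ S)) := by
      rw [principalMinor_neg, principalMinor_map]
    have h2 : (∏ j ∈ S, ((Polynomial.X : Polynomial R) - Polynomial.C (w j))) =
        ∑ T ∈ S.powerset, (Polynomial.X : Polynomial R) ^ T.card *
          ((-1 : Polynomial R) ^ (S \ T).card * Polynomial.C (∏ j ∈ S \ T, w j)) := by
      have := Finset.prod_add (fun _ : Fin n => (Polynomial.X : Polynomial R))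
        (fun j => -Polynomial.C (w j)) S
      simp only [sub_eq_add_neg]
      rw [this]
      refine Finset.sum_congr rfl fun T _ => ?_
      rw [Finset.prod_const]
      congr 1
      rw [show (fun j => -Polynomial.C (w j)) = (fun j => (-1 : Polynomial R) * Polynomial.C (w j))
          from by funext j; ring, Finset.prod_mul_distrib, Finset.prod_const, map_prod]
    rw [h1, h2, Finset.sum_mul]
    refine Finset.sum_congr rfl fun T _ => ?_
    simp only [_root_.map_mul, map_pow, _root_.map_neg, _root_.map_one, pow_add]
    ring
  rw [Finset.sum_congr rfl key, Polynomial.finset_sum_coeff, Finset.mul_sum]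
  simp only [Polynomial.finset_sum_coeff, Polynomial.coeff_C_mul, Polynomial.coeff_X_pow,
    Finset.mul_sum]
  -- kill the terms with T.card ≠ n - i and simplify signs
  have step : ∀ S ∈ (Finset.univ : Finset (Fin n)).powerset,
      (∑ T ∈ S.powerset, (-1 : R) ^ i *
        ((-1 : R) ^ ((S \ T).card + (Finset.univ \ S).card) *
          ((∏ j ∈ S \ T, w j) * principalMinor A (Finset.univ \ S)) *
            if n - i = T.card then 1 else 0)) =
      ∑ T ∈ S.powerset.filter (fun T => T.card = n - i),
        (∏ j ∈ S \ T, w j) * principalMinor A (Finset.univ \ S) := by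
    intro S hS
    rw [Finset.sum_filter]
    refine Finset.sum_congr rfl fun T hT => ?_
    by_cases h : T.card = n - i
    · have hTS : T ⊆ S := Finset.mem_powerset.mp hT
      have hSu : S.card ≤ n := by
        simpa using Finset.card_le_card (Finset.mem_powerset.mp hS)
      have hTS' : T.card ≤ S.card := Finset.card_le_card hTS
      have hcards : (S \ T).card + (Finset.univ \ S).card = i := by
        rw [Finset.card_sdiff_of_subset hTS, Finset.card_sdiff_of_subset (Finset.subset_univ S),
          Finset.card_univ, Fintype.card_fin]
        omega
      rw [hcards, if_pos h, if_pos h.symm, mul_one, ← mul_assoc, ← mul_assoc, ← pow_add,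
        Even.neg_one_pow ⟨i, by ring⟩, one_mul]
    · rw [if_neg h, if_neg (fun hh => h hh.symm), mul_zero, mul_zero]
  rw [Finset.sum_congr rfl step]
  -- now the combinatorial bijection
  rw [Finset.sum_sigma' ((Finset.univ : Finset (Fin n)).powerset)
      (fun S => S.powerset.filter (fun T => T.card = n - i))
      (fun S T => (∏ j ∈ S \ T, w j) * principalMinor A (Finset.univ \ S))]
  have rhs : ∀ J ∈ Finset.univ.powerset.filter (fun J : Finset (Fin n) => J.card ≤ i),
      (∑ N ∈ (Finset.univ \ J).powerset.filter
          (fun N : Finset (Fin n) => N.card = i - J.card),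
        principalMinor A N) * ∏ j ∈ J, w j =
      ∑ N ∈ (Finset.univ \ J).powerset.filter
          (fun N : Finset (Fin n) => N.card = i - J.card),
        principalMinor A N * ∏ j ∈ J, w j := by
    intro J _
    rw [Finset.sum_mul]
  rw [Finset.sum_congr rfl rhs,
    Finset.sum_sigma' (Finset.univ.powerset.filter (fun J : Finset (Fin n) => J.card ≤ i))
      (fun J => (Finset.univ \ J).powerset.filter
          (fun N : Finset (Fin n) => N.card = i - J.card))
      (fun J N => principalMinor A N * ∏ j ∈ J, w j)]
  refine Finset.sum_bij'
    (fun x _ => ⟨x.1 \ x.2, Finset.univ \ x.1⟩)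
    (fun y _ => ⟨Finset.univ \ y.2, Finset.univ \ (y.2 ∪ y.1)⟩) ?_ ?_ ?_ ?_ ?_
  · rintro ⟨S, T⟩ hx
    simp only [Finset.mem_sigma, Finset.mem_powerset, Finset.mem_filter] at hx ⊢
    obtain ⟨-, hTS, hTc⟩ := hx
    have hSu : S.card ≤ n := by simpa using Finset.card_le_card (Finset.subset_univ S)
    have hTS' : T.card ≤ S.card := Finset.card_le_card hTS
    refine ⟨⟨Finset.subset_univ _, ?_⟩, ?_, ?_⟩
    · rw [Finset.card_sdiff_of_subset hTS]; omega
    · exact Finset.sdiff_subset_sdiff (Finset.Subset.refl _) Finset.sdiff_subset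
    · rw [Finset.card_sdiff_of_subset (Finset.subset_univ S), Finset.card_sdiff_of_subset hTS,
        Finset.card_univ, Fintype.card_fin]
      omega
  · rintro ⟨J, N⟩ hy
    simp only [Finset.mem_sigma, Finset.mem_powerset, Finset.mem_filter] at hy ⊢
    obtain ⟨⟨-, hJc⟩, hN, hNc⟩ := hy
    obtain ⟨-, hdisj⟩ := Finset.subset_sdiff.mp hN
    have hNu : N.card ≤ n := by simpa using Finset.card_le_card (Finset.subset_univ N)
    have hcup : (N ∪ J).card = N.card + J.card := Finset.card_union_of_disjoint hdisj
    have hJu : J.card ≤ n := by simpa using Finset.card_le_card (Finset.subset_univ J)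
    have hcupn : (N ∪ J).card ≤ n := by
      simpa using Finset.card_le_card (Finset.subset_univ (N ∪ J))
    refine ⟨Finset.subset_univ _, ?_, ?_⟩
    · exact Finset.sdiff_subset_sdiff (Finset.Subset.refl _) Finset.subset_union_left
    · rw [Finset.card_sdiff_of_subset (Finset.subset_univ _), Finset.card_univ, Fintype.card_fin, hcup]
      omega
  · rintro ⟨S, T⟩ hx
    simp only [Finset.mem_sigma, Finset.mem_powerset, Finset.mem_filter] at hx
    obtain ⟨-, hTS, -⟩ := hx
    have h1 : Finset.univ \ (Finset.univ \ S) = S := by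
      ext x; simp
    have h2 : Finset.univ \ ((Finset.univ \ S) ∪ (S \ T)) = T := by
      ext x
      simp only [Finset.mem_sdiff, Finset.mem_union, Finset.mem_univ, true_and]
      have hx := @hTS x
      tauto
    exact Sigma.ext h1 (heq_of_eq h2)
  · rintro ⟨J, N⟩ hy
    simp only [Finset.mem_sigma, Finset.mem_powerset, Finset.mem_filter] at hy
    obtain ⟨-, hN, -⟩ := hy
    have hd : ∀ x, x ∈ N → x ∉ J := fun x hxN => (Finset.mem_sdiff.mp (hN hxN)).2
    have h1 : Finset.univ \ (Finset.univ \ N) = N := by ext x; simp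
    have h2 : (Finset.univ \ N) \ (Finset.univ \ (N ∪ J)) = J := by
      ext x
      simp only [Finset.mem_sdiff, Finset.mem_union, Finset.mem_univ, true_and]
      have hx := hd x
      tauto
    exact Sigma.ext h2 (heq_of_eq h1)
  · rintro ⟨S, T⟩ hx
    exact mul_comm _ _

end Aux2

/-- The `i`-th spectral invariant `S_i = C_i(v) - C_i(0)` of `A`, where
`det(A + D - λI) = ∑_{i=0}^n C_i(v) (-λ)^{n-i}` and `D = diag(v_1,…,v_n)`;
equivalently `C_i(v) = (-1)^i ⬝ (coefficient of λ^{n-i} in the characteristic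
polynomial of A + D)`. -/
noncomputable def spectralInvariant (A : Matrix (Fin n) (Fin n) K) (i : ℕ) :
    MvPolynomial (Fin n) K :=
  (-1 : MvPolynomial (Fin n) K) ^ i *
    (((A.map MvPolynomial.C + Matrix.diagonal fun j => MvPolynomial.X j).charpoly).coeff (n - i)
      - MvPolynomial.C (A.charpoly.coeff (n - i)))

/-- Lemma 2.2: for `1 ≤ i ≤ n`,
`S_i = ∑_{J ⊆ [n], 1 ≤ |J| ≤ i} (∑_{N ⊆ [n] \ J, |N| = i - |J|} det(A_N)) v^J`. -/
theorem spectralInvariant_eq (A : Matrix (Fin n) (Fin n) K) (i : ℕ) (hi1 : 1 ≤ i)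
    (hin : i ≤ n) :
    spectralInvariant A i =
      ∑ J ∈ Finset.univ.powerset.filter
          (fun J : Finset (Fin n) => 1 ≤ J.card ∧ J.card ≤ i),
        (∑ N ∈ (Finset.univ \ J).powerset.filter
            (fun N : Finset (Fin n) => N.card = i - J.card),
          MvPolynomial.C (principalMinor A N)) * ∏ j ∈ J, MvPolynomial.X j := by
  have hsplit : (Finset.univ : Finset (Fin n)).powerset.filter
      (fun J : Finset (Fin n) => J.card ≤ i) =
      insert ∅ (Finset.univ.powerset.filter
        (fun J : Finset (Fin n) => 1 ≤ J.card ∧ J.card ≤ i)) := by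
    ext J
    simp only [Finset.mem_insert, Finset.mem_filter, Finset.mem_powerset]
    constructor
    · rintro ⟨hs, hc⟩
      rcases Nat.eq_zero_or_pos J.card with h | h
      · exact Or.inl (Finset.card_eq_zero.mp h)
      · exact Or.inr ⟨hs, h, hc⟩
    · rintro (rfl | ⟨hs, -, hc⟩)
      · exact ⟨Finset.empty_subset _, by simp⟩
      · exact ⟨hs, hc⟩
  have hnotmem : ∅ ∉ Finset.univ.powerset.filter
      (fun J : Finset (Fin n) => 1 ≤ J.card ∧ J.card ≤ i) := by simp
  have h1 := charpoly_coeff_add_diagonal (A.map MvPolynomial.C)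
    (fun j => (MvPolynomial.X j : MvPolynomial (Fin n) K)) i hin
  have h2 := charpoly_coeff_add_diagonal A (fun _ => (0 : K)) i hin
  rw [hsplit, Finset.sum_insert hnotmem] at h1 h2
  simp only [Finset.sdiff_empty, Finset.card_empty, Nat.sub_zero, Finset.prod_empty,
    mul_one] at h1 h2
  have hz : (∑ J ∈ Finset.univ.powerset.filter
      (fun J : Finset (Fin n) => 1 ≤ J.card ∧ J.card ≤ i),
      (∑ N ∈ (Finset.univ \ J).powerset.filter
          (fun N : Finset (Fin n) => N.card = i - J.card),
        principalMinor A N) * ∏ _j ∈ J, (0 : K)) = 0 := by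
    refine Finset.sum_eq_zero fun J hJ => ?_
    have hJ1 : J.card ≠ 0 := by
      have := (Finset.mem_filter.mp hJ).2.1; omega
    rw [Finset.prod_const, zero_pow hJ1, mul_zero]
  rw [hz, add_zero, show A + Matrix.diagonal (fun _ => (0 : K)) = A by simp] at h2
  have h3 : ((-1 : MvPolynomial (Fin n) K)) ^ i * MvPolynomial.C (A.charpoly.coeff (n - i))
      = MvPolynomial.C (∑ N ∈ Finset.univ.powerset.filter
          (fun N : Finset (Fin n) => N.card = i), principalMinor A N) := by
    rw [← h2]
    simp [_root_.map_mul, map_pow, _root_.map_neg, _root_.map_one]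
  have h4 : (∑ N ∈ Finset.univ.powerset.filter
        (fun N : Finset (Fin n) => N.card = i),
      principalMinor (A.map MvPolynomial.C : Matrix (Fin n) (Fin n) (MvPolynomial (Fin n) K)) N)
      = MvPolynomial.C (∑ N ∈ Finset.univ.powerset.filter
          (fun N : Finset (Fin n) => N.card = i), principalMinor A N) := by
    rw [map_sum]
    exact Finset.sum_congr rfl fun N _ =>
      principalMinor_map (MvPolynomial.C : K →+* MvPolynomial (Fin n) K) A N
  rw [spectralInvariant, mul_sub, h1, h3, h4, add_sub_cancel_left]
  refine Finset.sum_congr rfl fun J _ => ?_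
  congr 1
  exact Finset.sum_congr rfl fun N _ =>
    principalMinor_map (MvPolynomial.C : K →+* MvPolynomial (Fin n) K) A N
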